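/- The real number A_P := −4·log(2π) + 2π/3 − 8·Σ_{n=1}^∞ log(1 − e^{−2πn}) satisfies A_P < −2 − 2·log π. -/
import Mathlib


open Real

lemma log_one_sub_ge (x : ℝ) (hx0 : 0 < x) (hx : x ≤ 1/2) :
    -2 * x ≤ Real.log (1 - x) := by
  have h1 : (0:ℝ) < 1 - x := by linarith
  have h2 : Real.log (1 - x)⁻¹ ≤ (1 - x)⁻¹ - 1 :=
    Real.log_le_sub_one_of_pos (by positivity)
  rw [Real.log_inv] at h2
  have h3 : (1 - x)⁻¹ ≤ 1 + 2 * x := by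
    rw [inv_le_iff_one_le_mul₀ h1]
    nlinarith
  linarith

theorem regular_value_bound :
    -4 * Real.log (2 * π) + 2 * π / 3 -
        8 * ∑' n : ℕ, Real.log (1 - Real.exp (-2 * π * (n + 1))) <
      -2 - 2 * Real.log π := by
  have hπ3 : 3 < π := Real.pi_gt_three
  set r : ℝ := Real.exp (-(2 * π)) with hrdef
  have hr0 : 0 < r := Real.exp_pos _
  have hexp6 : Real.exp 6 = Real.exp 1 ^ 6 := by
    rw [← Real.exp_nat_mul]; norm_num
  have hr400 : r ≤ 1 / 400 := by
    have h1 : r ≤ Real.exp (-6) := Real.exp_le_exp.mpr (by linarith)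
    have h2 : (400:ℝ) ≤ Real.exp 6 := by
      rw [hexp6]
      calc (400:ℝ) ≤ 2.7182818283 ^ 6 := by norm_num
        _ ≤ Real.exp 1 ^ 6 :=
          pow_le_pow_left₀ (by norm_num) Real.exp_one_gt_d9.le 6
    have h3 : Real.exp (-6) ≤ 1 / 400 := by
      rw [Real.exp_neg]
      rw [inv_le_comm₀ (Real.exp_pos 6) (by norm_num)]
      linarith
    linarith
  have hr1 : r < 1 := by linarith
  have hrn : ∀ n : ℕ, Real.exp (-2 * π * (n + 1)) = r ^ (n + 1) := by
    intro n
    rw [hrdef, ← Real.exp_nat_mul]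
    congr 1
    push_cast
    ring
  have hpow_half : ∀ n : ℕ, r ^ (n + 1) ≤ 1 / 2 := by
    intro n
    have : r ^ (n + 1) ≤ r ^ 1 :=
      pow_le_pow_of_le_one hr0.le hr1.le (by omega)
    simpa using this.trans (by linarith)
  have hpow_pos : ∀ n : ℕ, 0 < r ^ (n + 1) := fun n => pow_pos hr0 _
  -- summability of the geometric bound
  have hgeo : Summable (fun n : ℕ => r ^ (n + 1)) := by
    have := (summable_geometric_of_lt_one hr0.le hr1).mul_left r
    refine this.congr fun n => ?_
    rw [pow_succ, mul_comm]
  have hg : Summable (fun n : ℕ => -2 * r ^ (n + 1)) := hgeo.mul_left _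
  -- bounds on terms
  have hbound : ∀ n : ℕ, -2 * r ^ (n + 1) ≤
      Real.log (1 - Real.exp (-2 * π * (n + 1))) := by
    intro n
    rw [hrn n]
    exact log_one_sub_ge _ (hpow_pos n) (hpow_half n)
  have hneg : ∀ n : ℕ, Real.log (1 - Real.exp (-2 * π * (n + 1))) ≤ 0 := by
    intro n
    apply Real.log_nonpos
    · rw [hrn n]; linarith [hpow_half n]
    · rw [hrn n]; linarith [hpow_pos n]
  -- summability of f
  have hf : Summable (fun n : ℕ => Real.log (1 - Real.exp (-2 * π * (n + 1)))) := by
    rw [← summable_neg_iff]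
    exact Summable.of_nonneg_of_le (fun n => by linarith [hneg n])
      (fun n => by linarith [hbound n]) (hgeo.mul_left 2)
  -- compare sums
  have hsum_le : ∑' n : ℕ, (-2 * r ^ (n + 1)) ≤
      ∑' n : ℕ, Real.log (1 - Real.exp (-2 * π * (n + 1))) :=
    Summable.tsum_le_tsum hbound hg hf
  -- compute the geometric sum
  have hgeo_val : ∑' n : ℕ, r ^ (n + 1) = r * (1 - r)⁻¹ := by
    have h1 : ∑' n : ℕ, r ^ (n + 1) = ∑' n : ℕ, r * r ^ n := by
      congr 1; funext n; rw [pow_succ, mul_comm]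
    rw [h1, tsum_mul_left, tsum_geometric_of_lt_one hr0.le hr1]
  have hgval : ∑' n : ℕ, (-2 * r ^ (n + 1)) = -2 * (r * (1 - r)⁻¹) := by
    rw [tsum_mul_left, hgeo_val]
  have hinv2 : (1 - r)⁻¹ ≤ 2 := by
    rw [inv_le_comm₀ (by linarith) (by norm_num)]
    linarith
  have hglow : (-1 : ℝ) / 100 ≤ ∑' n : ℕ, (-2 * r ^ (n + 1)) := by
    rw [hgval]
    have h1 : r * (1 - r)⁻¹ ≤ (1/400) * 2 := by
      apply mul_le_mul hr400 hinv2 (le_of_lt (inv_pos.mpr (by linarith))) (by norm_num)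
    nlinarith
  have hS : (-1 : ℝ) / 100 ≤
      ∑' n : ℕ, Real.log (1 - Real.exp (-2 * π * (n + 1))) :=
    le_trans hglow hsum_le
  -- numeric bounds
  have hlog2 : (0.6931471803 : ℝ) < Real.log 2 := Real.log_two_gt_d9
  have hlogπ : 1 < Real.log π := by
    have h1 : Real.exp 1 < π := lt_trans Real.exp_one_lt_d9 (by linarith)
    have := Real.log_lt_log (Real.exp_pos 1) h1
    rwa [Real.log_exp] at this
  have hπ315 : π < 3.15 := by linarith [Real.pi_lt_d2]
  rw [Real.log_mul (by norm_num) (by positivity)]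
  linarith
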